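/- Morton-hybrid decoding inverts encoding: for i, j < 2^m and β ≤ m, if z = M(i / 2^β, j / 2^β) * 4^β + (i % 2^β) * 2^β + (j % 2^β), then i = (Morton-decode-row of (z / 4^β)) * 2^β + (z / 2^β) % 2^β and j = (Morton-decode-column of (z / 4^β)) * 2^β + z % 2^β. -/

import Mathlib

/-- Dilation: insert a zero bit between every two consecutive bits. -/
def dilate (k : ℕ) : ℕ := ∑ t ∈ Finset.range (k + 1), (k.testBit t).toNat * 4 ^ t

/-- Morton row decoding: un-dilate the odd-position bits. -/
def mortonDecodeRow (z : ℕ) : ℕ :=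
  ∑ t ∈ Finset.range (z + 1), (z.testBit (2 * t + 1)).toNat * 2 ^ t

/-- Morton column decoding: un-dilate the even-position bits. -/
def mortonDecodeCol (z : ℕ) : ℕ :=
  ∑ t ∈ Finset.range (z + 1), (z.testBit (2 * t)).toNat * 2 ^ t

private lemma sum_testBit (a : ℕ) : ∀ n, ∑ t ∈ Finset.range n, (a.testBit t).toNat * 2 ^ t = a % 2 ^ n := by
  intro n
  induction n with
  | zero => simp [Nat.mod_one]
  | succ n ih =>
      rw [Finset.sum_range_succ, ih, Nat.toNat_testBit, pow_succ,
        Nat.mod_mul]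
      ring

private lemma sum_bits_ext (c x n : ℕ) (h : x < n) :
    ∑ t ∈ Finset.range n, (x.testBit t).toNat * c ^ t
      = ∑ t ∈ Finset.range (x + 1), (x.testBit t).toNat * c ^ t := by
  symm
  apply Finset.sum_subset
  · exact Finset.range_subset_range.2 (by omega)
  · intro t _ ht
    have ht' : x + 1 ≤ t := by simpa using ht
    have htx : x < 2 ^ t := by
      calc x < 2 ^ x := Nat.lt_two_pow_self (n := x)
        _ ≤ 2 ^ t := Nat.pow_le_pow_right (by norm_num) (by omega)
    rw [Nat.testBit_eq_false_of_lt htx]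
    simp

private lemma dilate_rec (a : ℕ) : dilate a = a % 2 + 4 * dilate (a / 2) := by
  rcases Nat.eq_zero_or_pos a with h | h
  · subst h; simp [dilate]
  · unfold dilate
    rw [Finset.sum_range_succ' (fun t => (a.testBit t).toNat * 4 ^ t) a]
    have h1 : ∀ t, (a.testBit (t + 1)).toNat * 4 ^ (t + 1)
        = 4 * (((a / 2).testBit t).toNat * 4 ^ t) := by
      intro t
      rw [Nat.testBit_succ]
      ring
    have h3 : a / 2 + 1 ≤ a := Nat.div_lt_self h (by norm_num : 1 < 2)
    calc ∑ t ∈ Finset.range a, (a.testBit (t + 1)).toNat * 4 ^ (t + 1)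
          + (a.testBit 0).toNat * 4 ^ 0
        = 4 * ∑ t ∈ Finset.range a, ((a / 2).testBit t).toNat * 4 ^ t
          + (a.testBit 0).toNat * 4 ^ 0 := by
          rw [Finset.mul_sum]
          congr 1
          exact Finset.sum_congr rfl fun t _ => h1 t
      _ = a % 2 + 4 * ∑ t ∈ Finset.range (a / 2 + 1), ((a / 2).testBit t).toNat * 4 ^ t := by
          rw [sum_bits_ext 4 (a / 2) a h3]
          have : (a.testBit 0).toNat = a % 2 := by
            rw [Nat.toNat_testBit]; simp
          rw [this]
          ring
      _ = _ := rfl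

private lemma D_decomp (a b : ℕ) :
    2 * dilate a + dilate b
      = (2 * (a % 2) + b % 2) + 4 * (2 * dilate (a / 2) + dilate (b / 2)) := by
  rw [dilate_rec a, dilate_rec b]; ring

private lemma D_div4 (a b : ℕ) :
    (2 * dilate a + dilate b) / 4 = 2 * dilate (a / 2) + dilate (b / 2) := by
  rw [D_decomp a b]; omega

private lemma testBit_D_odd : ∀ t a b, (2 * dilate a + dilate b).testBit (2 * t + 1) = a.testBit t := by
  intro t
  induction t with
  | zero =>
      intro a b
      have h := D_decomp a b
      have hd : (2 * dilate a + dilate b) / 2 % 2 = a % 2 := by omega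
      rw [Nat.testBit_eq_decide_div_mod_eq, Nat.testBit_eq_decide_div_mod_eq]
      simp only [mul_zero, zero_add, pow_one, pow_zero, Nat.div_one]
      rw [hd]
  | succ t ih =>
      intro a b
      have e : 2 * (t + 1) + 1 = (2 * t + 1) + 1 + 1 := by omega
      rw [e, Nat.testBit_succ, Nat.testBit_succ, Nat.div_div_eq_div_mul]
      rw [show (2 * dilate a + dilate b) / (2 * 2) = (2 * dilate a + dilate b) / 4 from rfl]
      rw [D_div4, ih (a / 2) (b / 2), ← Nat.testBit_succ]

private lemma testBit_D_even : ∀ t a b, (2 * dilate a + dilate b).testBit (2 * t) = b.testBit t := by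
  intro t
  induction t with
  | zero =>
      intro a b
      have h := D_decomp a b
      have hd : (2 * dilate a + dilate b) % 2 = b % 2 := by omega
      rw [Nat.testBit_eq_decide_div_mod_eq, Nat.testBit_eq_decide_div_mod_eq]
      simp only [mul_zero, pow_zero, Nat.div_one]
      rw [hd]
  | succ t ih =>
      intro a b
      have e : 2 * (t + 1) = (2 * t) + 1 + 1 := by omega
      rw [e, Nat.testBit_succ, Nat.testBit_succ, Nat.div_div_eq_div_mul]
      rw [show (2 * dilate a + dilate b) / (2 * 2) = (2 * dilate a + dilate b) / 4 from rfl]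
      rw [D_div4, ih (a / 2) (b / 2), ← Nat.testBit_succ]

private lemma le_dilate (a : ℕ) : a ≤ dilate a := by
  unfold dilate
  calc a = a % 2 ^ (a + 1) := (Nat.mod_eq_of_lt (by
          calc a < 2 ^ a := Nat.lt_two_pow_self (n := a)
            _ ≤ 2 ^ (a + 1) := Nat.pow_le_pow_right (by norm_num) (by omega))).symm
    _ = ∑ t ∈ Finset.range (a + 1), (a.testBit t).toNat * 2 ^ t := (sum_testBit a (a + 1)).symm
    _ ≤ ∑ t ∈ Finset.range (a + 1), (a.testBit t).toNat * 4 ^ t := by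
        apply Finset.sum_le_sum
        intro t _
        exact Nat.mul_le_mul_left _ (Nat.pow_le_pow_left (by norm_num) t)

private lemma decodeRow_D (a b : ℕ) : mortonDecodeRow (2 * dilate a + dilate b) = a := by
  set M := 2 * dilate a + dilate b with hM
  have haM : a ≤ M := le_trans (le_dilate a) (by omega)
  unfold mortonDecodeRow
  have : ∑ t ∈ Finset.range (M + 1), (M.testBit (2 * t + 1)).toNat * 2 ^ t
      = ∑ t ∈ Finset.range (M + 1), (a.testBit t).toNat * 2 ^ t := by
    apply Finset.sum_congr rfl
    intro t _
    rw [hM, testBit_D_odd]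
  rw [this, sum_testBit]
  exact Nat.mod_eq_of_lt (by
    calc a ≤ M := haM
      _ < 2 ^ M := Nat.lt_two_pow_self (n := M)
      _ ≤ 2 ^ (M + 1) := Nat.pow_le_pow_right (by norm_num) (by omega))

private lemma decodeCol_D (a b : ℕ) : mortonDecodeCol (2 * dilate a + dilate b) = b := by
  set M := 2 * dilate a + dilate b with hM
  have hbM : b ≤ M := le_trans (le_dilate b) (by omega)
  unfold mortonDecodeCol
  have : ∑ t ∈ Finset.range (M + 1), (M.testBit (2 * t)).toNat * 2 ^ t
      = ∑ t ∈ Finset.range (M + 1), (b.testBit t).toNat * 2 ^ t := by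
    apply Finset.sum_congr rfl
    intro t _
    rw [hM, testBit_D_even]
  rw [this, sum_testBit]
  exact Nat.mod_eq_of_lt (by
    calc b ≤ M := hbM
      _ < 2 ^ M := Nat.lt_two_pow_self (n := M)
      _ ≤ 2 ^ (M + 1) := Nat.pow_le_pow_right (by norm_num) (by omega))

theorem morton_hybrid_decode (m β i j z : ℕ) (hβ : β ≤ m) (hi : i < 2 ^ m) (hj : j < 2 ^ m)
    (hz : z = (2 * dilate (i / 2 ^ β) + dilate (j / 2 ^ β)) * 4 ^ β +
        (i % 2 ^ β) * 2 ^ β + j % 2 ^ β) :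
    i = mortonDecodeRow (z / 4 ^ β) * 2 ^ β + (z / 2 ^ β) % 2 ^ β ∧
      j = mortonDecodeCol (z / 4 ^ β) * 2 ^ β + z % 2 ^ β := by
  set a := i / 2 ^ β with ha
  set b := j / 2 ^ β with hb
  set P := i % 2 ^ β with hP
  set Q := j % 2 ^ β with hQ
  set M := 2 * dilate a + dilate b with hM
  have hpow : (0:ℕ) < 2 ^ β := Nat.pow_pos (by norm_num)
  have h4 : (4:ℕ) ^ β = 2 ^ β * 2 ^ β := by
    rw [show (4:ℕ) = 2 * 2 from rfl, mul_pow]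
  have hPlt : P < 2 ^ β := Nat.mod_lt _ hpow
  have hQlt : Q < 2 ^ β := Nat.mod_lt _ hpow
  have hz2 : z = 2 ^ β * (2 ^ β * M + P) + Q := by rw [hz, h4]; ring
  have hzmod : z % 2 ^ β = Q := by
    rw [hz2, Nat.mul_add_mod]; exact Nat.mod_eq_of_lt hQlt
  have hzdiv : z / 2 ^ β = 2 ^ β * M + P := by
    rw [hz2, Nat.mul_add_div hpow, Nat.div_eq_of_lt hQlt, add_zero]
  have hzdivmod : z / 2 ^ β % 2 ^ β = P := by
    rw [hzdiv, Nat.mul_add_mod]; exact Nat.mod_eq_of_lt hPlt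
  have hzdiv4 : z / 4 ^ β = M := by
    rw [h4, ← Nat.div_div_eq_div_mul, hzdiv, Nat.mul_add_div hpow,
      Nat.div_eq_of_lt hPlt, add_zero]
  have hia : i = a * 2 ^ β + P := by
    rw [ha, hP, mul_comm]; exact (Nat.div_add_mod i (2 ^ β)).symm
  have hjb : j = b * 2 ^ β + Q := by
    rw [hb, hQ, mul_comm]; exact (Nat.div_add_mod j (2 ^ β)).symm
  constructor
  · rw [hzdiv4, hzdivmod, hM, decodeRow_D]; exact hia
  · rw [hzdiv4, hzmod, hM, decodeCol_D]; exact hjb
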